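/- System (3.1) is dissipative: fix φ ∈ (0, min{μ₁, μ₂}] and set ρ = K(r + φ)²/(4r). Then every solution (x(t), y(t), z(t)) of (3.1) defined for all t ≥ 0 with nonnegative coordinates satisfies limsup_{t→∞} (x(t) + c₁⁻¹·y(t) + c₂⁻¹·z(t)) ≤ ρ/φ. In particular, there is a compact subset C of [0,∞)³ such that every nonnegative solution eventually enters and remains in C. -/

import Mathlib

open Filter

/-- A nonnegative solution of system (3.1). -/
def IsNonnegSol31 (r K q₁ q₂ a₁ a₂ c₁ c₂ μ₁ μ₂ m₁ m₂ : ℝ)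
    (x y z : ℝ → ℝ) : Prop :=
  (∀ t ≥ (0:ℝ), 0 ≤ x t ∧ 0 ≤ y t ∧ 0 ≤ z t) ∧
  (∀ t ≥ (0:ℝ), HasDerivAt x
    (x t * (r * (1 - x t / K) - q₁ * y t / (1 + a₁ * x t)
      - q₂ * z t / (1 + a₂ * x t))) t) ∧
  (∀ t ≥ (0:ℝ), HasDerivAt y
    (y t * (c₁ * q₁ * x t / (1 + a₁ * x t) - μ₁ - m₁ * y t)) t) ∧
  (∀ t ≥ (0:ℝ), HasDerivAt z
    (z t * (c₂ * q₂ * x t / (1 + a₂ * x t) - μ₂ - m₂ * z t)) t)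

/-- Algebraic key inequality: the "derivative + φ·W" expression is at most ρ. -/
lemma alg_key (r K q₁ q₂ a₁ a₂ c₁ c₂ μ₁ μ₂ m₁ m₂ : ℝ)
    (hr : 0 < r) (hK : 0 < K)
    (ha₁ : 0 < a₁) (ha₂ : 0 < a₂) (hc₁ : 0 < c₁) (hc₂ : 0 < c₂)
    (hm₁ : 0 < m₁) (hm₂ : 0 < m₂)
    (φ : ℝ) (hφ₁ : 0 < φ) (hφμ₁ : φ ≤ μ₁) (hφμ₂ : φ ≤ μ₂)
    (X Y Z : ℝ) (hX : 0 ≤ X) (hY : 0 ≤ Y) (hZ : 0 ≤ Z) :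
    X * (r * (1 - X / K) - q₁ * Y / (1 + a₁ * X) - q₂ * Z / (1 + a₂ * X))
    + Y * (c₁ * q₁ * X / (1 + a₁ * X) - μ₁ - m₁ * Y) / c₁
    + Z * (c₂ * q₂ * X / (1 + a₂ * X) - μ₂ - m₂ * Z) / c₂
    + φ * (X + Y / c₁ + Z / c₂) ≤ K * (r + φ) ^ 2 / (4 * r) := by
  have hD₁ : (0:ℝ) < 1 + a₁ * X := by nlinarith
  have hD₂ : (0:ℝ) < 1 + a₂ * X := by nlinarith
  have heq : X * (r * (1 - X / K) - q₁ * Y / (1 + a₁ * X) - q₂ * Z / (1 + a₂ * X))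
      + Y * (c₁ * q₁ * X / (1 + a₁ * X) - μ₁ - m₁ * Y) / c₁
      + Z * (c₂ * q₂ * X / (1 + a₂ * X) - μ₂ - m₂ * Z) / c₂
      + φ * (X + Y / c₁ + Z / c₂)
      = (X * (r + φ) - r * X ^ 2 / K)
        + (Y / c₁) * (φ - μ₁ - m₁ * Y) + (Z / c₂) * (φ - μ₂ - m₂ * Z) := by
    field_simp
    ring
  rw [heq]
  have hA : X * (r + φ) - r * X ^ 2 / K ≤ K * (r + φ) ^ 2 / (4 * r) := by
    have he : K * (r + φ) ^ 2 / (4 * r) - (X * (r + φ) - r * X ^ 2 / K)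
        = (2 * r * X - K * (r + φ)) ^ 2 / (4 * r * K) := by
      field_simp
      ring
    nlinarith [sq_nonneg (2 * r * X - K * (r + φ)), div_nonneg (sq_nonneg (2 * r * X - K * (r + φ))) (by positivity : (0:ℝ) ≤ 4 * r * K)]
  have hB : (Y / c₁) * (φ - μ₁ - m₁ * Y) ≤ 0 :=
    mul_nonpos_of_nonneg_of_nonpos (by positivity) (by nlinarith)
  have hC : (Z / c₂) * (φ - μ₂ - m₂ * Z) ≤ 0 :=
    mul_nonpos_of_nonneg_of_nonpos (by positivity) (by nlinarith)
  linarith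

/-- Theorem 3.5: system (3.1) is dissipative. -/
theorem statement4
    (r K q₁ q₂ a₁ a₂ c₁ c₂ μ₁ μ₂ m₁ m₂ : ℝ)
    (hr : 0 < r) (hK : 0 < K) (hq₁ : 0 < q₁) (hq₂ : 0 < q₂)
    (ha₁ : 0 < a₁) (ha₂ : 0 < a₂) (hc₁ : 0 < c₁) (hc₂ : 0 < c₂)
    (hμ₁ : 0 < μ₁) (hμ₂ : 0 < μ₂) (hm₁ : 0 < m₁) (hm₂ : 0 < m₂)
    (φ : ℝ) (hφ₁ : 0 < φ) (hφ₂ : φ ≤ min μ₁ μ₂)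
    (ρ : ℝ) (hρ : ρ = K * (r + φ) ^ 2 / (4 * r)) :
    (∀ x y z : ℝ → ℝ,
      IsNonnegSol31 r K q₁ q₂ a₁ a₂ c₁ c₂ μ₁ μ₂ m₁ m₂ x y z →
      Filter.limsup (fun t => x t + y t / c₁ + z t / c₂) atTop ≤ ρ / φ) ∧
    ∃ C : Set (ℝ × ℝ × ℝ), IsCompact C ∧
      C ⊆ {p : ℝ × ℝ × ℝ | 0 ≤ p.1 ∧ 0 ≤ p.2.1 ∧ 0 ≤ p.2.2} ∧
      ∀ x y z : ℝ → ℝ,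
        IsNonnegSol31 r K q₁ q₂ a₁ a₂ c₁ c₂ μ₁ μ₂ m₁ m₂ x y z →
        ∃ T > (0:ℝ), ∀ t ≥ T, (x t, y t, z t) ∈ C := by
  have hρpos : 0 < ρ := by rw [hρ]; positivity
  have hρφ : 0 < ρ / φ := by positivity
  -- Gronwall-type bound for each solution
  have key : ∀ x y z : ℝ → ℝ,
      IsNonnegSol31 r K q₁ q₂ a₁ a₂ c₁ c₂ μ₁ μ₂ m₁ m₂ x y z →
      ∀ t ≥ (0:ℝ), x t + y t / c₁ + z t / c₂
        ≤ ρ / φ + (x 0 + y 0 / c₁ + z 0 / c₂ - ρ / φ) * Real.exp (-(φ * t)) := by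
    intro x y z hsol t ht
    obtain ⟨hpos, hx, hy, hz⟩ := hsol
    set W : ℝ → ℝ := fun s => x s + y s / c₁ + z s / c₂ with hW
    set D : ℝ → ℝ := fun s =>
      x s * (r * (1 - x s / K) - q₁ * y s / (1 + a₁ * x s) - q₂ * z s / (1 + a₂ * x s))
      + y s * (c₁ * q₁ * x s / (1 + a₁ * x s) - μ₁ - m₁ * y s) / c₁
      + z s * (c₂ * q₂ * x s / (1 + a₂ * x s) - μ₂ - m₂ * z s) / c₂ with hD
    set g : ℝ → ℝ := fun s => (W s - ρ / φ) * Real.exp (φ * s) with hg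
    have hWder : ∀ s ≥ (0:ℝ), HasDerivAt W (D s) s := by
      intro s hs
      exact ((hx s hs).add ((hy s hs).div_const c₁)).add ((hz s hs).div_const c₂)
    have hgder : ∀ s ≥ (0:ℝ), HasDerivAt g ((D s + φ * (W s - ρ / φ)) * Real.exp (φ * s)) s := by
      intro s hs
      have he : HasDerivAt (fun u : ℝ => Real.exp (φ * u)) (Real.exp (φ * s) * φ) s := by
        simpa using (((hasDerivAt_id s).const_mul φ).exp)
      have := ((hWder s hs).sub_const (ρ / φ)).mul he
      exact this.congr_deriv (by ring)
    have hderle : ∀ s ∈ Set.Ioi (0:ℝ), deriv g s ≤ 0 := by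
      intro s hs
      have hs0 : (0:ℝ) ≤ s := le_of_lt hs
      rw [(hgder s hs0).deriv]
      have halg := alg_key r K q₁ q₂ a₁ a₂ c₁ c₂ μ₁ μ₂ m₁ m₂ hr hK ha₁ ha₂ hc₁ hc₂
        hm₁ hm₂ φ hφ₁ (le_trans hφ₂ (min_le_left _ _)) (le_trans hφ₂ (min_le_right _ _))
        (x s) (y s) (z s) (hpos s hs0).1 (hpos s hs0).2.1 (hpos s hs0).2.2
      have hDW : D s + φ * W s ≤ ρ := by
        rw [hρ]; simpa [hD, hW] using halg
      have h1 : D s + φ * (W s - ρ / φ) ≤ 0 := by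
        have : φ * (ρ / φ) = ρ := by field_simp
        nlinarith
      exact mul_nonpos_of_nonpos_of_nonneg h1 (Real.exp_nonneg _)
    have hant : AntitoneOn g (Set.Ici (0:ℝ)) := by
      apply antitoneOn_of_deriv_nonpos (convex_Ici 0)
      · exact fun s hs => (hgder s hs).continuousAt.continuousWithinAt
      · intro s hs
        rw [interior_Ici] at hs
        exact ((hgder s (le_of_lt hs)).differentiableAt).differentiableWithinAt
      · intro s hs
        rw [interior_Ici] at hs
        exact hderle s hs
    have hgt : g t ≤ g 0 := hant (Set.self_mem_Ici) ht ht
    have h2 : (W t - ρ / φ) * Real.exp (φ * t) ≤ W 0 - ρ / φ := by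
      simpa [hg] using hgt
    have h3 : W t - ρ / φ ≤ (W 0 - ρ / φ) * Real.exp (-(φ * t)) := by
      have h4 : (W t - ρ / φ) * Real.exp (φ * t) * Real.exp (-(φ * t))
          ≤ (W 0 - ρ / φ) * Real.exp (-(φ * t)) :=
        mul_le_mul_of_nonneg_right h2 (Real.exp_nonneg _)
      calc W t - ρ / φ = (W t - ρ / φ) * Real.exp (φ * t) * Real.exp (-(φ * t)) := by
            rw [mul_assoc, ← Real.exp_add]; simp
        _ ≤ (W 0 - ρ / φ) * Real.exp (-(φ * t)) := h4
    have := h3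
    simp only [hW] at this
    linarith
  constructor
  · -- limsup bound
    intro x y z hsol
    set W : ℝ → ℝ := fun t => x t + y t / c₁ + z t / c₂ with hW
    set c₀ : ℝ := W 0 - ρ / φ with hc₀
    set B : ℝ → ℝ := fun t => ρ / φ + c₀ * Real.exp (-(φ * t)) with hB
    have hWB : W ≤ᶠ[atTop] B := by
      filter_upwards [eventually_ge_atTop (0:ℝ)] with t ht
      exact key x y z hsol t ht
    have hφt : Tendsto (fun t : ℝ => φ * t) atTop atTop :=
      Tendsto.const_mul_atTop hφ₁ tendsto_id
    have hexp : Tendsto (fun t : ℝ => Real.exp (-(φ * t))) atTop (nhds 0) :=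
      Real.tendsto_exp_neg_atTop_nhds_zero.comp hφt
    have hBt : Tendsto B atTop (nhds (ρ / φ)) := by
      have : Tendsto (fun t => ρ / φ + c₀ * Real.exp (-(φ * t))) atTop
          (nhds (ρ / φ + c₀ * 0)) := tendsto_const_nhds.add (tendsto_const_nhds.mul hexp)
      simpa using this
    have hcob : atTop.IsCoboundedUnder (· ≤ ·) W := by
      apply Filter.IsBoundedUnder.isCoboundedUnder_le (α := ℝ)
      refine ⟨0, ?_⟩
      rw [Filter.eventually_map]
      filter_upwards [eventually_ge_atTop (0:ℝ)] with t ht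
      obtain ⟨hpos, _, _, _⟩ := hsol
      have h := hpos t ht
      have : (0:ℝ) ≤ W t := by
        have := h.1; have := h.2.1; have := h.2.2
        have h1 : 0 ≤ y t / c₁ := by positivity
        have h2 : 0 ≤ z t / c₂ := by positivity
        simp only [hW]; linarith
      exact this
    have hbd : atTop.IsBoundedUnder (· ≤ ·) B := hBt.isBoundedUnder_le
    calc limsup W atTop ≤ limsup B atTop := limsup_le_limsup hWB hcob hbd
      _ = ρ / φ := hBt.limsup_eq
  · -- compact absorbing set
    set B₀ : ℝ := ρ / φ + 1 with hB₀
    refine ⟨Set.Icc 0 B₀ ×ˢ Set.Icc 0 (c₁ * B₀) ×ˢ Set.Icc 0 (c₂ * B₀), ?_, ?_, ?_⟩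
    · exact (isCompact_Icc.prod (isCompact_Icc.prod isCompact_Icc))
    · rintro ⟨p1, p2, p3⟩ ⟨h1, h2, h3⟩
      exact ⟨h1.1, h2.1, h3.1⟩
    · intro x y z hsol
      set W : ℝ → ℝ := fun t => x t + y t / c₁ + z t / c₂ with hW
      set M : ℝ := |W 0 - ρ / φ| + 1 with hM
      have hM1 : (1:ℝ) ≤ M := by
        have := abs_nonneg (W 0 - ρ / φ); simp only [hM]; linarith
      have hM0 : (0:ℝ) < M := lt_of_lt_of_le one_pos hM1
      refine ⟨max 1 (Real.log M / φ), lt_of_lt_of_le one_pos (le_max_left _ _), ?_⟩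
      intro t ht
      have ht1 : (1:ℝ) ≤ t := le_trans (le_max_left _ _) ht
      have ht0 : (0:ℝ) ≤ t := le_trans zero_le_one ht1
      have htlog : Real.log M / φ ≤ t := le_trans (le_max_right _ _) ht
      have hlogle : Real.log M ≤ φ * t := by
        rw [div_le_iff₀ hφ₁] at htlog; linarith [htlog]
      have hMle : M ≤ Real.exp (φ * t) := by
        calc M = Real.exp (Real.log M) := (Real.exp_log hM0).symm
          _ ≤ Real.exp (φ * t) := Real.exp_le_exp.mpr hlogle
      have hexple : Real.exp (-(φ * t)) ≤ 1 / M := by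
        rw [Real.exp_neg, one_div]
        exact inv_anti₀ hM0 hMle
      have hWle : W t ≤ B₀ := by
        have hk := key x y z hsol t ht0
        have habs : (W 0 - ρ / φ) * Real.exp (-(φ * t)) ≤ 1 := by
          calc (W 0 - ρ / φ) * Real.exp (-(φ * t))
              ≤ |W 0 - ρ / φ| * Real.exp (-(φ * t)) :=
                mul_le_mul_of_nonneg_right (le_abs_self _) (Real.exp_nonneg _)
            _ ≤ M * (1 / M) := by
                apply mul_le_mul (by simp only [hM]; linarith [abs_nonneg (W 0 - ρ/φ)]) hexple
                  (Real.exp_nonneg _) (le_of_lt hM0)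
            _ = 1 := by field_simp
        simp only [hW] at hk ⊢
        simp only [hB₀]
        linarith
      obtain ⟨hpos, _, _, _⟩ := hsol
      obtain ⟨hx0, hy0, hz0⟩ := hpos t ht0
      have hyc : 0 ≤ y t / c₁ := by positivity
      have hzc : 0 ≤ z t / c₂ := by positivity
      have hWt : x t + y t / c₁ + z t / c₂ ≤ B₀ := hWle
      clear_value W M B₀
      simp only [Set.mem_prod, Set.mem_Icc]
      refine ⟨⟨hx0, by linarith [hWt, hyc, hzc]⟩, ⟨hy0, ?_⟩, ⟨hz0, ?_⟩⟩
      · exact (div_le_iff₀' hc₁).mp (by linarith)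
      · exact (div_le_iff₀' hc₂).mp (by linarith)
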